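/- Let V = ℝ^{n+1} with standard basis e₀, e₁, ..., eₙ, and V₀ = span(e₁,...,eₙ). For y ∈ ℝⁿ let u_y ∈ SL_{n+1}(ℝ) fix e₀ and send e_i to e_i + y_i e₀ for i ≥ 1. For w ∈ Λʲ(V) define c(w)_i = Σ_{J ⊆ {1,...,n}, #J = j−1} ⟨e_i ∧ e_J, w⟩ e_J for i = 0,...,n, and let π: Λʲ(V) → Λʲ(V₀) be the orthogonal projection. Then for g_t = diag(e^t, e^{−t/n},...,e^{−t/n}) acting on Λʲ(V), one has g_t u_y w = e^{−jt/n} π(w) + e^{(n+1−j)t/n} e₀ ∧ (Σ_{i=0}^n y_i c(w)_i), where y₀ = 1. -/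

import Mathlib

open Finset Real

variable {n : ℕ}

/-- The coefficient `⟨e_i ∧ e_J, w⟩` of an element `w` of the exterior algebra of `ℝ^{n+1}`,
written in coordinates with respect to the orthonormal basis `{e_I}`. -/
def wedgeCoeff (i : Fin (n + 1)) (J : Finset (Fin (n + 1))) (w : Finset (Fin (n + 1)) → ℝ) : ℝ :=
  if i ∈ J then 0 else (-1 : ℝ) ^ (J.filter (· < i)).card * w (insert i J)

/-- The minor of `g` with rows `I` and columns `K` (listed in increasing order):
the entry of the compound matrix giving the action of `g` on the exterior power. -/
def minor (g : Matrix (Fin (n + 1)) (Fin (n + 1)) ℝ) (I K : Finset (Fin (n + 1))) : ℝ :=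
  Matrix.det (Matrix.of fun a b : Fin I.card =>
    g ((I.sort (· ≤ ·)).getD a 0) ((K.sort (· ≤ ·)).getD b 0))

/-- The multiplicative (compound-matrix) action of `g` on the exterior algebra of `ℝ^{n+1}`,
in coordinates: `(g·w)(I) = ∑_K det(g_{I,K}) w(K)` over `K` of the same cardinality. -/
def extAct (g : Matrix (Fin (n + 1)) (Fin (n + 1)) ℝ) (w : Finset (Fin (n + 1)) → ℝ) :
    Finset (Fin (n + 1)) → ℝ :=
  fun I => ∑ K ∈ Finset.univ.powersetCard I.card, minor g I K * w K

/-- The orthogonal projection `π : Λ(V) → Λ(V₀)`, `V₀ = span(e₁,…,eₙ)`, in coordinates. -/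
def piProj (w : Finset (Fin (n + 1)) → ℝ) : Finset (Fin (n + 1)) → ℝ :=
  fun I => if (0 : Fin (n + 1)) ∈ I then 0 else w I

/-- Wedging with `e₀` of an element of `Λ(V₀)`, in coordinates. -/
def e0Wedge (u : Finset (Fin (n + 1)) → ℝ) : Finset (Fin (n + 1)) → ℝ :=
  fun I => if (0 : Fin (n + 1)) ∈ I then u (I.erase 0) else 0

/-- The `J`-coordinate of `c(w)_i = Σ_{J ⊆ {1,…,n}, #J = j−1} ⟨e_i ∧ e_J, w⟩ e_J`. -/
def cComp (w : Finset (Fin (n + 1)) → ℝ) (i : Fin (n + 1)) (J : Finset (Fin (n + 1))) : ℝ :=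
  if (0 : Fin (n + 1)) ∈ J then 0 else wedgeCoeff i J w

/-- The unipotent matrix `u_y` fixing `e₀` and sending `e_i ↦ e_i + y_i e₀` for `i ≥ 1`. -/
def uMat (y : Fin n → ℝ) : Matrix (Fin (n + 1)) (Fin (n + 1)) ℝ :=
  Matrix.of fun i k =>
    if i = k then 1
    else if i = 0 then (if h : (k : ℕ) = 0 then 0 else y ⟨(k : ℕ) - 1, by omega⟩) else 0

/-- The diagonal matrix `g_t = diag(e^t, e^{−t/n}, …, e^{−t/n})`. -/
noncomputable def gMat (n : ℕ) (t : ℝ) : Matrix (Fin (n + 1)) (Fin (n + 1)) ℝ :=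
  Matrix.of fun i k =>
    if i = k then (if i = 0 then Real.exp t else Real.exp (-t / n)) else 0

/-- `(1, y)` as a function on `Fin (n+1)`, i.e. `y₀ = 1`. -/
def ytil (y : Fin n → ℝ) : Fin (n + 1) → ℝ :=
  fun k => if h : (k : ℕ) = 0 then 1 else y ⟨(k : ℕ) - 1, by omega⟩

/-- the `a`-th element of `S` in increasing order. -/
def el (S : Finset (Fin (n + 1))) (a : ℕ) : Fin (n + 1) := (S.sort (· ≤ ·)).getD a 0

lemma el_mem (S : Finset (Fin (n + 1))) {a : ℕ} (h : a < S.card) : el S a ∈ S := by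
  rw [el, List.getD_eq_getElem _ _ (by simpa using h)]
  exact (Finset.mem_sort _).1 (List.getElem_mem _)

lemma el_inj (S : Finset (Fin (n + 1))) {a b : ℕ} (ha : a < S.card) (hb : b < S.card)
    (h : el S a = el S b) : a = b := by
  rw [el, el, List.getD_eq_getElem _ _ (by simpa using ha),
    List.getD_eq_getElem _ _ (by simpa using hb)] at h
  exact ((S.sort_nodup _).getElem_inj_iff).1 h

lemma el_surj (S : Finset (Fin (n + 1))) {x : Fin (n + 1)} (hx : x ∈ S) :
    ∃ a : ℕ, a < S.card ∧ el S a = x := by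
  have : x ∈ S.sort (· ≤ ·) := (Finset.mem_sort _).2 hx
  obtain ⟨i, hi, hix⟩ := List.mem_iff_getElem.1 this
  exact ⟨i, by simpa using hi, by rw [el, List.getD_eq_getElem _ _ hi, hix]⟩

lemma sort_filter_append (J : Finset (Fin (n + 1))) (k : Fin (n + 1)) :
    J.sort (· ≤ ·) =
      (J.filter (· < k)).sort (· ≤ ·) ++ (J.filter (fun x => ¬ x < k)).sort (· ≤ ·) := by
  refine (fun hp hs => List.Perm.eq_of_pairwise' (J.pairwise_sort _) hs hp) ?_ ?_
  · rw [← Multiset.coe_eq_coe]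
    rw [Finset.sort_eq, ← Multiset.coe_add, Finset.sort_eq, Finset.sort_eq,
      Finset.filter_val, Finset.filter_val]
    exact (Multiset.filter_add_not (fun x => x < k) J.1).symm
  · refine List.pairwise_append.mpr ⟨Finset.pairwise_sort _ _, Finset.pairwise_sort _ _, ?_⟩
    intro x hx y hy
    rw [Finset.mem_sort] at hx hy
    exact le_of_lt (lt_of_lt_of_le (Finset.mem_filter.1 hx).2
      (not_lt.1 (Finset.mem_filter.1 hy).2))

lemma sort_insert_filter (J : Finset (Fin (n + 1))) {k : Fin (n + 1)} (hk : k ∉ J) :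
    (insert k J).sort (· ≤ ·) =
      (J.filter (· < k)).sort (· ≤ ·) ++ k :: (J.filter (fun x => ¬ x < k)).sort (· ≤ ·) := by
  refine (fun hp hs => List.Perm.eq_of_pairwise' (Finset.pairwise_sort _ _) hs hp) ?_ ?_
  · have perm1 : List.Perm ((insert k J).sort (· ≤ ·)) (k :: J.sort (· ≤ ·)) := by
      rw [← Multiset.coe_eq_coe]
      rw [Finset.sort_eq, Finset.insert_val_of_notMem hk, ← Multiset.cons_coe, Finset.sort_eq]
    have perm2 : List.Perm
        ((J.filter (· < k)).sort (· ≤ ·) ++ k :: (J.filter (fun x => ¬ x < k)).sort (· ≤ ·))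
        (k :: J.sort (· ≤ ·)) := by
      refine List.perm_middle.trans ?_
      rw [← sort_filter_append]
    exact perm1.trans perm2.symm
  · refine List.pairwise_append.mpr ⟨Finset.pairwise_sort _ _, ?_, ?_⟩
    · refine List.pairwise_cons.mpr ⟨?_, Finset.pairwise_sort _ _⟩
      intro y hy
      rw [Finset.mem_sort] at hy
      exact not_lt.1 (Finset.mem_filter.1 hy).2
    · intro x hx y hy
      rw [Finset.mem_sort] at hx
      have hxk : x < k := (Finset.mem_filter.1 hx).2
      rcases List.mem_cons.1 hy with rfl | hy
      · exact le_of_lt hxk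
      · rw [Finset.mem_sort] at hy
        exact le_of_lt (lt_of_lt_of_le hxk (not_lt.1 (Finset.mem_filter.1 hy).2))

lemma el_insert {J : Finset (Fin (n + 1))} {k : Fin (n + 1)} (hk : k ∉ J) (b : ℕ) :
    el (insert k J) b =
      if b < (J.filter (· < k)).card then el J b
      else if b = (J.filter (· < k)).card then k else el J (b - 1) := by
  have hlen : ((J.filter (· < k)).sort (· ≤ ·)).length = (J.filter (· < k)).card :=
    Finset.length_sort _
  simp only [el]
  rw [sort_insert_filter J hk, sort_filter_append J k]
  split_ifs with h1 h2
  · have hb1 : b < ((J.filter (· < k)).sort (· ≤ ·)).length := by omega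
    rw [List.getD_append _ _ _ _ hb1, List.getD_append _ _ _ _ hb1]
  · have hb2 : ((J.filter (· < k)).sort (· ≤ ·)).length ≤ b := by omega
    rw [List.getD_append_right _ _ _ _ hb2]
    have h3 : b - ((J.filter (· < k)).sort (· ≤ ·)).length = 0 := by omega
    rw [h3]
    rfl
  · have hb3 : ((J.filter (· < k)).sort (· ≤ ·)).length ≤ b := by omega
    have hb4 : ((J.filter (· < k)).sort (· ≤ ·)).length ≤ b - 1 := by omega
    rw [List.getD_append_right _ _ _ _ hb3, List.getD_append_right _ _ _ _ hb4]
    have h3 : b - ((J.filter (· < k)).sort (· ≤ ·)).length =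
        (b - 1 - ((J.filter (· < k)).sort (· ≤ ·)).length) + 1 := by omega
    rw [h3, List.getD_cons_succ]

lemma el_insert_zero {J : Finset (Fin (n + 1))} (hJ : (0 : Fin (n + 1)) ∉ J) (b : ℕ) :
    el (insert (0 : Fin (n + 1)) J) b = if b = 0 then 0 else el J (b - 1) := by
  have h := el_insert hJ (k := 0) b
  have hf : J.filter (· < (0 : Fin (n + 1))) = ∅ := by
    apply Finset.filter_false_of_mem
    intro x _
    exact not_lt.2 (Fin.zero_le x)
  rw [hf] at h
  rw [h]; split_ifs <;> simp_all

lemma uMat_zero_row (y : Fin n → ℝ) (k : Fin (n + 1)) : uMat y 0 k = ytil y k := by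
  unfold uMat ytil
  by_cases hk : k = 0
  · subst hk; simp
  · have hk' : (k : ℕ) ≠ 0 := fun h => hk (Fin.ext h)
    simp [Matrix.of_apply, (Ne.symm hk : (0 : Fin (n+1)) ≠ k), hk', hk]

lemma Mentry0 (t : ℝ) (y : Fin n → ℝ) (k : Fin (n + 1)) :
    (gMat n t * uMat y) 0 k = Real.exp t * ytil y k := by
  rw [Matrix.mul_apply]
  rw [Finset.sum_eq_single_of_mem 0 (Finset.mem_univ _)
    (by intro l _ hl; simp [gMat, (Ne.symm hl : (0:Fin (n+1)) ≠ l)])]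
  rw [uMat_zero_row]
  simp [gMat]

lemma MentryNe (t : ℝ) (y : Fin n → ℝ) {i : Fin (n + 1)} (hi : i ≠ 0) (k : Fin (n + 1)) :
    (gMat n t * uMat y) i k = if i = k then Real.exp (-t / (n : ℝ)) else 0 := by
  rw [Matrix.mul_apply]
  rw [Finset.sum_eq_single_of_mem i (Finset.mem_univ _)
    (by intro l _ hl; simp [gMat, (Ne.symm hl : i ≠ l)])]
  by_cases hik : i = k
  · subst hik; simp [gMat, uMat, hi]
  · simp [gMat, uMat, hi, hik]

lemma det_formula {m : ℕ} (A : Matrix (Fin (m + 1)) (Fin (m + 1)) ℝ) (p : Fin (m + 1)) (x : ℝ)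
    (h1 : ∀ a b : Fin (m + 1), a ≠ 0 → p.cycleRange b ≠ a → A a b = 0)
    (h2 : ∀ a : Fin (m + 1), a ≠ 0 → A a (p.cycleRange⁻¹ a) = x) :
    A.det = (-1 : ℝ) ^ (p : ℕ) * A 0 p * x ^ m := by
  set σ := p.cycleRange⁻¹ with hσ
  have hdet := Matrix.det_permute' σ A
  have hsign : ((Equiv.Perm.sign σ : ℤ) : ℝ) = (-1 : ℝ) ^ (p : ℕ) := by
    rw [hσ, Equiv.Perm.sign_inv, Fin.sign_cycleRange]
    push_cast
    ring
  have htri : (A.submatrix id σ).det = ∏ i, (A.submatrix id σ) i i := by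
    apply Matrix.det_of_upperTriangular
    intro i j hij
    have hi0 : i ≠ 0 := Fin.pos_iff_ne_zero.1 (lt_of_le_of_lt (Fin.zero_le j) hij)
    apply h1 _ _ hi0
    rw [hσ, Equiv.Perm.inv_def, Equiv.apply_symm_apply]
    exact ne_of_lt hij
  have h00 : σ 0 = p := by
    rw [hσ, ← Fin.cycleRange_self p, Equiv.Perm.inv_def, Equiv.symm_apply_apply]
  have hprod : ∏ i, (A.submatrix id σ) i i = A 0 p * x ^ m := by
    rw [← Finset.mul_prod_erase Finset.univ _ (Finset.mem_univ 0)]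
    have h1' : (A.submatrix id σ) 0 0 = A 0 p := by
      simp [Matrix.submatrix_apply, h00]
    have h2' : ∏ a ∈ Finset.univ.erase (0 : Fin (m + 1)), (A.submatrix id σ) a a
        = x ^ (Finset.univ.erase (0 : Fin (m + 1))).card :=
      Finset.prod_eq_pow_card (fun a ha => h2 a (Finset.ne_of_mem_erase ha))
    rw [Finset.card_erase_of_mem (Finset.mem_univ _), Finset.card_univ, Fintype.card_fin] at h2'
    rw [h1', h2']
    norm_num
  have key : A.det = (-1 : ℝ) ^ (p : ℕ) * (A.submatrix id σ).det := by
    rw [hdet]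
    rw [show ((Equiv.Perm.sign σ : ℤˣ) : ℝ) * A.det = ((Equiv.Perm.sign σ : ℤ) : ℝ) * A.det by
      norm_cast]
    rw [hsign, ← mul_assoc, ← mul_pow]
    norm_num
  rw [key, htri, hprod, mul_assoc]

lemma minor_eq_zero (t : ℝ) (y : Fin n → ℝ) {I K : Finset (Fin (n + 1))} {x : Fin (n + 1)}
    (hxI : x ∈ I) (hx0 : x ≠ 0) (hxK : x ∉ K) : minor (gMat n t * uMat y) I K = 0 := by
  obtain ⟨a, ha, hel⟩ := el_surj I hxI
  show Matrix.det (Matrix.of fun a b : Fin I.card =>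
    (gMat n t * uMat y) (el I a) (el K b)) = 0
  apply Matrix.det_eq_zero_of_row_eq_zero ⟨a, ha⟩
  intro b
  rw [Matrix.of_apply]
  simp only []
  rw [hel, MentryNe t y hx0]
  have hb : el K (b : ℕ) ∈ K ∨ el K (b : ℕ) = 0 := by
    by_cases hbK : (b : ℕ) < K.card
    · exact Or.inl (el_mem K hbK)
    · right
      rw [el, List.getD_eq_default]
      simpa using hbK
  rcases hb with hb | hb
  · exact if_neg (show ¬ x = el K (b : ℕ) from fun h => hxK (by rw [h]; exact hb))
  · exact if_neg (show ¬ x = el K (b : ℕ) from fun h => hx0 (by rw [h]; exact hb))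

lemma minor_self (t : ℝ) (y : Fin n → ℝ) {I : Finset (Fin (n + 1))}
    (h0 : (0 : Fin (n + 1)) ∉ I) :
    minor (gMat n t * uMat y) I I = Real.exp (-t / (n : ℝ)) ^ I.card := by
  show Matrix.det (Matrix.of fun a b : Fin I.card =>
    (gMat n t * uMat y) (el I a) (el I b)) = _
  have hd : (Matrix.of fun a b : Fin I.card => (gMat n t * uMat y) (el I a) (el I b))
      = Matrix.diagonal (fun _ => Real.exp (-t / (n : ℝ))) := by
    ext a b
    have haI : el I (a : ℕ) ∈ I := el_mem I a.isLt
    have ha0 : el I (a : ℕ) ≠ 0 := fun h => h0 (h ▸ haI)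
    rw [Matrix.of_apply, MentryNe t y ha0]
    by_cases hab : a = b
    · subst hab
      simp [Matrix.diagonal_apply_eq]
    · rw [if_neg (fun h => hab (Fin.ext (el_inj I a.isLt b.isLt h))),
        Matrix.diagonal_apply_ne _ hab]
  rw [hd, Matrix.det_diagonal]
  simp

lemma minor_insert (t : ℝ) (y : Fin n → ℝ) {J : Finset (Fin (n + 1))}
    (hJ : (0 : Fin (n + 1)) ∉ J) {k : Fin (n + 1)} (hk : k ∉ J) :
    minor (gMat n t * uMat y) (insert 0 J) (insert k J) =
      (-1 : ℝ) ^ ((J.filter (· < k)).card) * (Real.exp t * ytil y k) *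
        Real.exp (-t / (n : ℝ)) ^ J.card := by
  have hIc : (insert (0 : Fin (n + 1)) J).card = J.card + 1 :=
    Finset.card_insert_of_notMem hJ
  set m := J.card with hm
  set pn := (J.filter (· < k)).card with hpn
  have hpm : pn ≤ m := Finset.card_filter_le _ _
  set p : Fin (m + 1) := ⟨pn, by omega⟩ with hpdef
  have helI : ∀ a : ℕ, el (insert (0 : Fin (n + 1)) J) a = if a = 0 then 0 else el J (a - 1) :=
    el_insert_zero hJ
  have helK : ∀ b : ℕ, el (insert k J) b =
      if b < pn then el J b else if b = pn then k else el J (b - 1) := el_insert hk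
  have helI_mem : ∀ a : Fin (m + 1), (a : ℕ) ≠ 0 → el (insert (0 : Fin (n + 1)) J) (a : ℕ) ∈ J := by
    intro a ha
    rw [helI, if_neg ha]
    have h2 := a.isLt
    exact el_mem J (by omega)
  have helI0 : ∀ a : Fin (m + 1), (a : ℕ) ≠ 0 →
      el (insert (0 : Fin (n + 1)) J) (a : ℕ) ≠ 0 := by
    intro a ha h
    exact hJ (h ▸ helI_mem a ha)
  have hcol : ∀ b : Fin (m + 1), el (insert k J) (b : ℕ) =
      if p.cycleRange b = 0 then k
      else el (insert (0 : Fin (n + 1)) J) ((p.cycleRange b : ℕ)) := by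
    intro b
    rcases lt_trichotomy b p with hb | hb | hb
    · have hc : (p.cycleRange b : ℕ) = (b : ℕ) + 1 := Fin.coe_cycleRange_of_lt hb
      have hne : p.cycleRange b ≠ 0 := by
        intro h; rw [h] at hc; simp at hc
      have hbpn : (b : ℕ) < pn := hb
      rw [if_neg hne, hc, helK, helI, if_pos hbpn, if_neg (by omega : ¬ (b : ℕ) + 1 = 0)]
      simp
    · rw [hb, Fin.cycleRange_self, if_pos rfl, helK]
      show (if pn < pn then el J pn else if pn = pn then k else el J (pn - 1)) = k
      simp
    · have hc : p.cycleRange b = b := Fin.cycleRange_of_gt hb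
      have hpb : pn < (b : ℕ) := hb
      have hb0 : (b : ℕ) ≠ 0 := by omega
      rw [hc, if_neg (Fin.ne_of_val_ne hb0), helK, helI]
      rw [if_neg (by omega : ¬ (b : ℕ) < pn), if_neg (by omega : ¬ (b : ℕ) = pn), if_neg hb0]
  set A : Matrix (Fin (m + 1)) (Fin (m + 1)) ℝ :=
    Matrix.of (fun a b : Fin (m + 1) => (gMat n t * uMat y) (el (insert 0 J) (a : ℕ)) (el (insert k J) (b : ℕ)))
    with hA
  have hmin : minor (gMat n t * uMat y) (insert 0 J) (insert k J) = A.det := by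
    have hsub := Matrix.det_submatrix_equiv_self (finCongr hIc.symm)
      (Matrix.of fun a b : Fin (insert (0 : Fin (n + 1)) J).card =>
        (gMat n t * uMat y) (el (insert 0 J) (a : ℕ)) (el (insert k J) (b : ℕ)))
    show Matrix.det (Matrix.of fun a b : Fin (insert (0 : Fin (n + 1)) J).card =>
      (gMat n t * uMat y) (el (insert 0 J) (a : ℕ)) (el (insert k J) (b : ℕ))) = A.det
    rw [← hsub]
    rfl
  rw [hmin]
  have hform := det_formula A p (Real.exp (-t / (n : ℝ))) ?_ ?_
  · rw [hform]
    have hA0p : A 0 p = Real.exp t * ytil y k := by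
      have h0 : el (insert (0 : Fin (n + 1)) J) ((0 : Fin (m + 1)) : ℕ) = 0 := by
        rw [helI]; simp
      have hkp : el (insert k J) ((p : Fin (m + 1)) : ℕ) = k := by
        show el (insert k J) pn = k
        rw [helK]
        simp
      show (gMat n t * uMat y) (el (insert 0 J) ((0 : Fin (m + 1)) : ℕ)) (el (insert k J) ((p : Fin (m + 1)) : ℕ))
        = _
      rw [h0, hkp, Mentry0]
    rw [hA0p]
  · -- h1
    intro a b ha hba
    have ha' : (a : ℕ) ≠ 0 := fun h => ha (Fin.ext h)
    show (gMat n t * uMat y) (el (insert 0 J) (a : ℕ)) (el (insert k J) (b : ℕ)) = 0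
    rw [MentryNe t y (helI0 a ha'), hcol b]
    by_cases hz : p.cycleRange b = 0
    · rw [if_pos hz]
      apply if_neg
      intro h
      by_cases hk0 : k = 0
      · exact helI0 a ha' (by rw [h, hk0])
      · exact hk (by have := helI_mem a ha'; rwa [h] at this)
    · rw [if_neg hz]
      apply if_neg
      intro h
      have hval := el_inj (insert (0 : Fin (n + 1)) J)
        (by rw [hIc]; exact a.isLt) (by rw [hIc]; exact (p.cycleRange b).isLt) h
      exact hba (Fin.ext hval.symm)
  · -- h2
    intro a ha
    have ha' : (a : ℕ) ≠ 0 := fun h => ha (Fin.ext h)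
    show (gMat n t * uMat y) (el (insert 0 J) (a : ℕ)) (el (insert k J) ((p.cycleRange⁻¹ a : Fin (m + 1)) : ℕ)) = _
    rw [hcol (p.cycleRange⁻¹ a), Equiv.Perm.inv_def, Equiv.apply_symm_apply, if_neg ha,
      MentryNe t y (helI0 a ha'), if_pos rfl]

/-- `g_t u_y w = e^{−jt/n} π(w) + e^{(n+1−j)t/n} e₀ ∧ (Σ_{i=0}^n y_i c(w)_i)` for
`w ∈ Λʲ(ℝ^{n+1})`, where `y₀ = 1`. -/
theorem gt_uy_on_exterior (hn : 1 ≤ n) (j : ℕ) (hj1 : 1 ≤ j) (hjn : j ≤ n)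
    (y : Fin n → ℝ) (t : ℝ) (w : Finset (Fin (n + 1)) → ℝ)
    (hw : ∀ I : Finset (Fin (n + 1)), I.card ≠ j → w I = 0) :
    extAct (gMat n t * uMat y) w = fun I =>
      Real.exp (-(j : ℝ) * t / n) * piProj w I +
        Real.exp (((n : ℝ) + 1 - j) * t / n) *
          e0Wedge (fun J => ∑ i, ytil y i * cComp w i J) I := by
  have hn0 : (n : ℝ) ≠ 0 := Nat.cast_ne_zero.2 (by omega)
  funext I
  by_cases h0I : (0 : Fin (n + 1)) ∈ I
  · set J := I.erase 0 with hJdef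
    have hJ0 : (0 : Fin (n + 1)) ∉ J := Finset.notMem_erase _ _
    have hI : I = insert 0 J := (Finset.insert_erase h0I).symm
    have hIc : I.card = J.card + 1 := by rw [hI, Finset.card_insert_of_notMem hJ0]
    have hproj : piProj w I = 0 := by simp [piProj, h0I]
    have hwedge : e0Wedge (fun J' => ∑ i, ytil y i * cComp w i J') I
        = ∑ i, ytil y i * cComp w i J := by simp [e0Wedge, h0I, hJdef]
    show (∑ K ∈ Finset.univ.powersetCard I.card, minor (gMat n t * uMat y) I K * w K) = _
    rw [hproj, hwedge, mul_zero, zero_add]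
    have hinj : ∀ x ∈ Jᶜ, ∀ x' ∈ Jᶜ, insert x J = insert x' J → x = x' := by
      intro x hx x' hx' h
      have hxJ : x ∉ J := Finset.mem_compl.1 hx
      have : x ∈ insert x' J := h ▸ Finset.mem_insert_self x J
      rcases Finset.mem_insert.1 this with h' | h'
      · exact h'
      · exact absurd h' hxJ
    have himg_sub : Jᶜ.image (fun k => insert k J) ⊆ Finset.univ.powersetCard I.card := by
      intro K hK
      obtain ⟨k, hk, rfl⟩ := Finset.mem_image.1 hK
      rw [Finset.mem_powersetCard]
      exact ⟨Finset.subset_univ _,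
        by rw [Finset.card_insert_of_notMem (Finset.mem_compl.1 hk), hIc]⟩
    have hvanish : ∀ K ∈ Finset.univ.powersetCard I.card,
        K ∉ Jᶜ.image (fun k => insert k J) → minor (gMat n t * uMat y) I K * w K = 0 := by
      intro K hKmem hKim
      rw [Finset.mem_powersetCard] at hKmem
      by_cases hJK : J ⊆ K
      · exfalso
        have hcardK : K.card = J.card + 1 := by rw [hKmem.2, hIc]
        have hns : ¬ K ⊆ J := by
          intro h
          have := Finset.card_le_card h
          omega
        obtain ⟨k, hkK, hkJ⟩ := Finset.not_subset.1 hns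
        have hsub2 : insert k J ⊆ K := Finset.insert_subset hkK hJK
        have hKeq : insert k J = K := Finset.eq_of_subset_of_card_le hsub2
          (by rw [Finset.card_insert_of_notMem hkJ]; omega)
        exact hKim (Finset.mem_image.2 ⟨k, Finset.mem_compl.2 hkJ, hKeq⟩)
      · obtain ⟨x, hxJ, hxK⟩ := Finset.not_subset.1 hJK
        have hxI : x ∈ I := by rw [hI]; exact Finset.mem_insert_of_mem hxJ
        have hx0 : x ≠ 0 := fun h => hJ0 (by rw [← h]; exact hxJ)
        rw [minor_eq_zero t y hxI hx0 hxK, zero_mul]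
    rw [← Finset.sum_subset himg_sub hvanish, Finset.sum_image hinj]
    have hres : ∑ i, ytil y i * cComp w i J = ∑ i ∈ Jᶜ, ytil y i * cComp w i J := by
      symm
      apply Finset.sum_subset (Finset.subset_univ _)
      intro i _ hi
      have hiJ : i ∈ J := by simpa using hi
      simp [cComp, wedgeCoeff, hiJ, hJ0]
    rw [hres, Finset.mul_sum]
    apply Finset.sum_congr rfl
    intro k hk
    have hkJ : k ∉ J := Finset.mem_compl.1 hk
    rw [hI, minor_insert t y hJ0 hkJ, cComp, if_neg hJ0, wedgeCoeff, if_neg hkJ]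
    by_cases hcard : J.card + 1 = j
    · have hjc : (J.card : ℝ) = (j : ℝ) - 1 := by
        have : J.card = j - 1 := by omega
        rw [this, Nat.cast_sub hj1]
        simp
      have hexp : Real.exp t * Real.exp (-t / (n : ℝ)) ^ J.card
          = Real.exp (((n : ℝ) + 1 - j) * t / n) := by
        rw [← Real.exp_nat_mul, ← Real.exp_add]
        congr 1
        rw [hjc]
        field_simp
        ring
      rw [← hexp]
      ring
    · have hzero : w (insert k J) = 0 :=
        hw _ (by rw [Finset.card_insert_of_notMem hkJ]; omega)
      rw [hzero]
      ring
  · have hproj : piProj w I = w I := by simp [piProj, h0I]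
    have hwedge : e0Wedge (fun J' => ∑ i, ytil y i * cComp w i J') I = 0 := by
      simp [e0Wedge, h0I]
    show (∑ K ∈ Finset.univ.powersetCard I.card, minor (gMat n t * uMat y) I K * w K) = _
    rw [hproj, hwedge, mul_zero, add_zero]
    rw [Finset.sum_eq_single_of_mem I
      (Finset.mem_powersetCard.2 ⟨Finset.subset_univ _, rfl⟩) ?_]
    · rw [minor_self t y h0I]
      by_cases hcard : I.card = j
      · congr 1
        rw [← Real.exp_nat_mul, hcard]
        congr 1
        ring
      · rw [hw I hcard]
        ring
    · intro K hKm hKne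
      rw [Finset.mem_powersetCard] at hKm
      have hns : ¬ I ⊆ K := by
        intro hsub
        exact hKne (Finset.eq_of_subset_of_card_le hsub (le_of_eq hKm.2)).symm
      obtain ⟨x, hxI, hxK⟩ := Finset.not_subset.1 hns
      have hx0 : x ≠ 0 := fun h => h0I (by rw [← h]; exact hxI)
      rw [minor_eq_zero t y hxI hx0 hxK, zero_mul]
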